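/- For any causal betting strategy b, the expected log of the causally conditioned bet satisfies E[log b(X^n || Y^n)] ≤ −H(X^n || Y^n), with equality when b(x^n||y^n) = p(x^n||y^n). Consequently, the maximum expected log-wealth in a horse race with causal side information is W*(X^n||Y^n) = E[log o(X^n)] − H(X^n || Y^n), achieved by b(x_i|x^{i-1},y^i) = p(x_i|x^{i-1},y^i). -/

import Mathlib

set_option linter.unusedSectionVars false
set_option linter.unreachableTactic false
set_option linter.unusedTactic false
open scoped Classical
open Real

noncomputable section

variable {α β : Type} [Fintype α] [DecidableEq α] [Fintype β] [DecidableEq β]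

/-- Probability of the event `E` under the joint pmf `p` of `(X^n, Y^n)`. -/
def pr {n : ℕ} (p : (Fin n → α) → (Fin n → β) → ℝ)
    (E : (Fin n → α) → (Fin n → β) → Prop) : ℝ :=
  ∑ x, ∑ y, if E x y then p x y else 0

/-- `p` is a probability mass function on pairs of sequences. -/
def IsPmf {n : ℕ} (p : (Fin n → α) → (Fin n → β) → ℝ) : Prop :=
  (∀ x y, 0 ≤ p x y) ∧ ∑ x, ∑ y, p x y = 1

/-- The conditional pmf `p(x_i | x^{i-1}, y^{i-d})` evaluated along `(x, y)`. -/
def condX {n : ℕ} (p : (Fin n → α) → (Fin n → β) → ℝ) (d : ℕ) (i : Fin n)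
    (x : Fin n → α) (y : Fin n → β) : ℝ :=
  pr p (fun x' y' => (∀ j, j < i → x' j = x j) ∧ x' i = x i ∧
      ∀ j : Fin n, (j : ℕ) + d ≤ (i : ℕ) → y' j = y j) /
  pr p (fun x' y' => (∀ j, j < i → x' j = x j) ∧
      ∀ j : Fin n, (j : ℕ) + d ≤ (i : ℕ) → y' j = y j)

/-- The conditional pmf `p(y_i | y^{i-1}, x^{i-d})` evaluated along `(x, y)`. -/
def condY {n : ℕ} (p : (Fin n → α) → (Fin n → β) → ℝ) (d : ℕ) (i : Fin n)
    (x : Fin n → α) (y : Fin n → β) : ℝ :=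
  pr p (fun x' y' => (∀ j, j < i → y' j = y j) ∧ y' i = y i ∧
      ∀ j : Fin n, (j : ℕ) + d ≤ (i : ℕ) → x' j = x j) /
  pr p (fun x' y' => (∀ j, j < i → y' j = y j) ∧
      ∀ j : Fin n, (j : ℕ) + d ≤ (i : ℕ) → x' j = x j)

/-- Causally conditioned pmf `p(x^n || y^{n-d}) = ∏ᵢ p(xᵢ | x^{i-1}, y^{i-d})`. -/
def ccX {n : ℕ} (p : (Fin n → α) → (Fin n → β) → ℝ) (d : ℕ)
    (x : Fin n → α) (y : Fin n → β) : ℝ :=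
  ∏ i, condX p d i x y

/-- Causally conditioned pmf `p(y^n || x^{n-d}) = ∏ᵢ p(yᵢ | y^{i-1}, x^{i-d})`. -/
def ccY {n : ℕ} (p : (Fin n → α) → (Fin n → β) → ℝ) (d : ℕ)
    (x : Fin n → α) (y : Fin n → β) : ℝ :=
  ∏ i, condY p d i x y

/-- Marginal pmf of `X^n`. -/
def pX {n : ℕ} (p : (Fin n → α) → (Fin n → β) → ℝ) (x : Fin n → α) : ℝ := ∑ y, p x y

/-- Marginal pmf of `Y^n`. -/
def pY {n : ℕ} (p : (Fin n → α) → (Fin n → β) → ℝ) (y : Fin n → β) : ℝ := ∑ x, p x y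

/-- `H(X^n)` in bits. -/
def HX {n : ℕ} (p : (Fin n → α) → (Fin n → β) → ℝ) : ℝ :=
  -(∑ x, ∑ y, p x y * Real.logb 2 (pX p x))

/-- `H(Y^n)` in bits. -/
def HY {n : ℕ} (p : (Fin n → α) → (Fin n → β) → ℝ) : ℝ :=
  -(∑ x, ∑ y, p x y * Real.logb 2 (pY p y))

/-- Joint entropy `H(X^n, Y^n)` in bits. -/
def Hjoint {n : ℕ} (p : (Fin n → α) → (Fin n → β) → ℝ) : ℝ :=
  -(∑ x, ∑ y, p x y * Real.logb 2 (p x y))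

/-- Conditional entropy `H(X_i | X^{i-1}, Y^{i-d})` in bits. -/
def HcondX {n : ℕ} (p : (Fin n → α) → (Fin n → β) → ℝ) (d : ℕ) (i : Fin n) : ℝ :=
  -(∑ x, ∑ y, p x y * Real.logb 2 (condX p d i x y))

/-- Conditional entropy `H(Y_i | Y^{i-1}, X^{i-d})` in bits. -/
def HcondY {n : ℕ} (p : (Fin n → α) → (Fin n → β) → ℝ) (d : ℕ) (i : Fin n) : ℝ :=
  -(∑ x, ∑ y, p x y * Real.logb 2 (condY p d i x y))

/-- Causally conditional entropy `H(X^n || Y^{n-d}) = Σᵢ H(Xᵢ | X^{i-1}, Y^{i-d})`. -/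
def HccX {n : ℕ} (p : (Fin n → α) → (Fin n → β) → ℝ) (d : ℕ) : ℝ := ∑ i, HcondX p d i

/-- Causally conditional entropy `H(Y^n || X^{n-d})`. -/
def HccY {n : ℕ} (p : (Fin n → α) → (Fin n → β) → ℝ) (d : ℕ) : ℝ := ∑ i, HcondY p d i

/-- Conditional mutual information `I(Y^i; X_i | X^{i-1})`
(as the expectation of `log (p(xᵢ|x^{i-1},y^i) / p(xᵢ|x^{i-1}))`;
note `condX p n` is `p(xᵢ|x^{i-1})`, conditioning on no `y`'s at all). -/
def cmiYX {n : ℕ} (p : (Fin n → α) → (Fin n → β) → ℝ) (i : Fin n) : ℝ :=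
  ∑ x, ∑ y, p x y * Real.logb 2 (condX p 0 i x y / condX p n i x y)

/-- Conditional mutual information `I(X^i; Y_i | Y^{i-1})`. -/
def cmiXY {n : ℕ} (p : (Fin n → α) → (Fin n → β) → ℝ) (i : Fin n) : ℝ :=
  ∑ x, ∑ y, p x y * Real.logb 2 (condY p 0 i x y / condY p n i x y)

/-- Directed information `I(Y^n → X^n) = Σᵢ I(Y^i; X_i | X^{i-1})`. -/
def dirYX {n : ℕ} (p : (Fin n → α) → (Fin n → β) → ℝ) : ℝ := ∑ i, cmiYX p i

/-- Directed information `I(X^n → Y^n) = Σᵢ I(X^i; Y_i | Y^{i-1})`. -/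
def dirXY {n : ℕ} (p : (Fin n → α) → (Fin n → β) → ℝ) : ℝ := ∑ i, cmiXY p i

/-- Directed information `I(Y^{n-1} → X^n) = Σᵢ I(Y^{i-1}; X_i | X^{i-1})`
(the term for `i = 1` vanishes, so we may sum over all `i`). -/
def dirY1X {n : ℕ} (p : (Fin n → α) → (Fin n → β) → ℝ) : ℝ :=
  ∑ i, ∑ x, ∑ y, p x y * Real.logb 2 (condX p 1 i x y / condX p n i x y)

/-- Mutual information `I(X^n; Y^n)` in bits. -/
def miXY {n : ℕ} (p : (Fin n → α) → (Fin n → β) → ℝ) : ℝ :=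
  ∑ x, ∑ y, p x y * Real.logb 2 (p x y / (pX p x * pY p y))

/-- A causal gambling strategy: `b i x y` is the fraction of wealth bet on horse `x i`
given the history `(x^{i-1}, y^i)`; it is nonnegative, depends only on `(x^i, y^i)`
(the bet-upon horse `x i` together with the causal history), and is normalized. -/
def IsCausalBet {n : ℕ} (b : Fin n → (Fin n → α) → (Fin n → β) → ℝ) : Prop :=
  (∀ i x y, 0 ≤ b i x y) ∧
  (∀ i x x' y y', (∀ j, j ≤ i → x j = x' j) → (∀ j, j ≤ i → y j = y' j) →
    b i x y = b i x' y') ∧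
  (∀ i x y, ∑ a : α, b i (Function.update x i a) y = 1)

/-- `E[log b(X^n || Y^n)]` where `b(x^n||y^n) = ∏ᵢ b(xᵢ|x^{i-1},y^i)`. -/
def Elogb {n : ℕ} (p : (Fin n → α) → (Fin n → β) → ℝ)
    (b : Fin n → (Fin n → α) → (Fin n → β) → ℝ) : ℝ :=
  ∑ x, ∑ y, p x y * Real.logb 2 (∏ i, b i x y)

/-- The growth `W(X^n||Y^n) = E[log S(X^n||Y^n)]`, where
`S(x^n||y^n) = ∏ᵢ b(xᵢ|x^{i-1},y^i) o(xᵢ|x^{i-1})`. -/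
def growthW {n : ℕ} (p : (Fin n → α) → (Fin n → β) → ℝ)
    (o : Fin n → (Fin n → α) → ℝ)
    (b : Fin n → (Fin n → α) → (Fin n → β) → ℝ) : ℝ :=
  ∑ x, ∑ y, p x y * Real.logb 2 (∏ i, b i x y * o i x)

/-- `E[log o(X^n)]` with `o(x^n) = ∏ᵢ o(xᵢ|x^{i-1})`. -/
def Elogo {n : ℕ} (p : (Fin n → α) → (Fin n → β) → ℝ)
    (o : Fin n → (Fin n → α) → ℝ) : ℝ :=
  ∑ x, ∑ y, p x y * Real.logb 2 (∏ i, o i x)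


section AuxCausalGambling

variable {n : ℕ}

lemma pr_nonneg (p : (Fin n → α) → (Fin n → β) → ℝ) (hp0 : ∀ x y, 0 ≤ p x y)
    (E : (Fin n → α) → (Fin n → β) → Prop) : 0 ≤ pr p E := by
  unfold pr
  refine Finset.sum_nonneg fun x _ => Finset.sum_nonneg fun y _ => ?_
  split_ifs with h
  · exact hp0 x y
  · exact le_rfl

lemma pr_congr (p : (Fin n → α) → (Fin n → β) → ℝ)
    {E E' : (Fin n → α) → (Fin n → β) → Prop} (h : ∀ x y, E x y ↔ E' x y) :
    pr p E = pr p E' := by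
  unfold pr
  refine Finset.sum_congr rfl fun x _ => Finset.sum_congr rfl fun y _ => ?_
  simp only [h x y]

lemma pr_mono (p : (Fin n → α) → (Fin n → β) → ℝ) (hp0 : ∀ x y, 0 ≤ p x y)
    {E E' : (Fin n → α) → (Fin n → β) → Prop} (h : ∀ x y, E x y → E' x y) :
    pr p E ≤ pr p E' := by
  unfold pr
  refine Finset.sum_le_sum fun x _ => Finset.sum_le_sum fun y _ => ?_
  by_cases hE : E x y
  · rw [if_pos hE, if_pos (h x y hE)]
  · rw [if_neg hE]
    split_ifs with h'
    · exact hp0 x y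
    · exact le_rfl

lemma le_pr (p : (Fin n → α) → (Fin n → β) → ℝ) (hp0 : ∀ x y, 0 ≤ p x y)
    (E : (Fin n → α) → (Fin n → β) → Prop) {x y} (hE : E x y) : p x y ≤ pr p E := by
  unfold pr
  have h1 : p x y ≤ ∑ y', if E x y' then p x y' else 0 := by
    have := Finset.single_le_sum (f := fun y' => if E x y' then p x y' else 0)
      (fun i _ => by by_cases h : E x i <;> simp [h, hp0 x i]) (Finset.mem_univ y)
    exact le_trans (le_of_eq (if_pos hE).symm) this
  refine le_trans h1 ?_
  exact Finset.single_le_sum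
    (f := fun x' => ∑ y', if E x' y' then p x' y' else 0)
    (fun i _ => Finset.sum_nonneg fun j _ => by
      by_cases h : E i j <;> simp [h, hp0 i j]) (Finset.mem_univ x)

lemma condX_nonneg (p : (Fin n → α) → (Fin n → β) → ℝ) (hp0 : ∀ x y, 0 ≤ p x y)
    (d : ℕ) (i : Fin n) (x : Fin n → α) (y : Fin n → β) : 0 ≤ condX p d i x y :=
  div_nonneg (pr_nonneg p hp0 _) (pr_nonneg p hp0 _)

lemma condX_pos (p : (Fin n → α) → (Fin n → β) → ℝ) (hp0 : ∀ x y, 0 ≤ p x y)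
    (d : ℕ) (i : Fin n) {x : Fin n → α} {y : Fin n → β} (hpos : 0 < p x y) :
    0 < condX p d i x y := by
  unfold condX
  have hnum : 0 < pr p (fun x' y' => (∀ j, j < i → x' j = x j) ∧ x' i = x i ∧
      ∀ j : Fin n, (j : ℕ) + d ≤ (i : ℕ) → y' j = y j) :=
    lt_of_lt_of_le hpos (le_pr p hp0 _ ⟨fun _ _ => rfl, rfl, fun _ _ => rfl⟩)
  have hden : pr p (fun x' y' => (∀ j, j < i → x' j = x j) ∧ x' i = x i ∧
      ∀ j : Fin n, (j : ℕ) + d ≤ (i : ℕ) → y' j = y j) ≤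
      pr p (fun x' y' => (∀ j, j < i → x' j = x j) ∧
      ∀ j : Fin n, (j : ℕ) + d ≤ (i : ℕ) → y' j = y j) :=
    pr_mono p hp0 fun x' y' h => ⟨h.1, h.2.2⟩
  exact div_pos hnum (lt_of_lt_of_le hnum hden)

lemma condX_congr (p : (Fin n → α) → (Fin n → β) → ℝ) (i : Fin n)
    {x x' : Fin n → α} {y y' : Fin n → β}
    (hx : ∀ j : Fin n, (j : ℕ) ≤ (i : ℕ) → x j = x' j)
    (hy : ∀ j : Fin n, (j : ℕ) ≤ (i : ℕ) → y j = y' j) :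
    condX p 0 i x y = condX p 0 i x' y' := by
  unfold condX
  congr 1
  · refine pr_congr p fun u v => ?_
    constructor
    · rintro ⟨h1, h2, h3⟩
      exact ⟨fun j hj => (h1 j hj).trans (hx j (le_of_lt hj)),
        h2.trans (hx i le_rfl),
        fun j hj => (h3 j hj).trans (hy j (by first | omega | (simp only [Fin.val_mk] at *; omega)))⟩
    · rintro ⟨h1, h2, h3⟩
      exact ⟨fun j hj => (h1 j hj).trans (hx j (le_of_lt hj)).symm,
        h2.trans (hx i le_rfl).symm,
        fun j hj => (h3 j hj).trans (hy j (by first | omega | (simp only [Fin.val_mk] at *; omega))).symm⟩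
  · refine pr_congr p fun u v => ?_
    constructor
    · rintro ⟨h1, h3⟩
      exact ⟨fun j hj => (h1 j hj).trans (hx j (le_of_lt hj)),
        fun j hj => (h3 j hj).trans (hy j (by first | omega | (simp only [Fin.val_mk] at *; omega)))⟩
    · rintro ⟨h1, h3⟩
      exact ⟨fun j hj => (h1 j hj).trans (hx j (le_of_lt hj)).symm,
        fun j hj => (h3 j hj).trans (hy j (by first | omega | (simp only [Fin.val_mk] at *; omega))).symm⟩

lemma sum_split {γ : Type} [Fintype γ] [DecidableEq γ] {m : ℕ} (k : Fin m) (c₀ : γ)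
    (g : (Fin m → γ) → ℝ) :
    ∑ x : Fin m → γ, g x
      = ∑ x : Fin m → γ, if x k = c₀ then ∑ a : γ, g (Function.update x k a) else 0 := by
  have h1 : ∀ x : Fin m → γ,
      (if x k = c₀ then ∑ a : γ, g (Function.update x k a) else 0)
        = ∑ a : γ, if x k = c₀ then g (Function.update x k a) else 0 := by
    intro x; split_ifs with h
    · rfl
    · simp
  have h2 : (∑ x : Fin m → γ, ∑ a : γ, if x k = c₀ then g (Function.update x k a) else 0)
      = ∑ q : (Fin m → γ) × γ, if q.1 k = c₀ then g (Function.update q.1 k q.2) else 0 :=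
    (Fintype.sum_prod_type (f := fun q : (Fin m → γ) × γ =>
      if q.1 k = c₀ then g (Function.update q.1 k q.2) else 0)).symm
  rw [Finset.sum_congr rfl fun x _ => h1 x, h2]
  rw [Finset.sum_ite, Finset.sum_const_zero, add_zero]
  symm
  refine Finset.sum_nbij' (fun q => Function.update q.1 k q.2)
    (fun x => (Function.update x k c₀, x k)) ?_ ?_ ?_ ?_ ?_
  · intro q hq; exact Finset.mem_univ _
  · intro x hx
    simp only [Finset.mem_filter, Finset.mem_univ, true_and, Function.update_self]
  · intro q hq
    simp only [Finset.mem_filter, Finset.mem_univ, true_and] at hq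
    ext j
    · simp only [Function.update_idem]
      rw [← hq]
      rw [Function.update_eq_self]
    · simp only [Function.update_self]
  · intro x hx
    simp only [Function.update_idem, Function.update_eq_self]
  · intro q hq; rfl

/-- joint prefix probability `p(x^{<k}, y^{<k})` -/
def auxA (p : (Fin n → α) → (Fin n → β) → ℝ) (k : ℕ)
    (x : Fin n → α) (y : Fin n → β) : ℝ :=
  pr p (fun x' y' => (∀ j : Fin n, (j : ℕ) < k → x' j = x j) ∧
    ∀ j : Fin n, (j : ℕ) < k → y' j = y j)

/-- mixed prefix probability `p(x^{<k}, y^{<k+1})` -/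
def auxB (p : (Fin n → α) → (Fin n → β) → ℝ) (k : ℕ)
    (x : Fin n → α) (y : Fin n → β) : ℝ :=
  pr p (fun x' y' => (∀ j : Fin n, (j : ℕ) < k → x' j = x j) ∧
    ∀ j : Fin n, (j : ℕ) < k + 1 → y' j = y j)

/-- partial product `∏_{i < k} b_i / p(x_i|...)` -/
def auxProd (p : (Fin n → α) → (Fin n → β) → ℝ)
    (b : Fin n → (Fin n → α) → (Fin n → β) → ℝ) (k : ℕ)
    (x : Fin n → α) (y : Fin n → β) : ℝ :=
  ∏ i ∈ Finset.univ.filter fun i : Fin n => (i : ℕ) < k,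
    b i x y / condX p 0 i x y

def auxF (p : (Fin n → α) → (Fin n → β) → ℝ)
    (b : Fin n → (Fin n → α) → (Fin n → β) → ℝ)
    (x₀ : Fin n → α) (y₀ : Fin n → β) (k : ℕ) : ℝ :=
  ∑ x, ∑ y, if (∀ j : Fin n, k ≤ (j : ℕ) → x j = x₀ j ∧ y j = y₀ j)
    then auxA p k x y * auxProd p b k x y else 0


lemma auxA_eq_one (p : (Fin n → α) → (Fin n → β) → ℝ) (hp1 : ∑ x, ∑ y, p x y = 1)
    (x : Fin n → α) (y : Fin n → β) : auxA p 0 x y = 1 := by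
  unfold auxA pr
  rw [← hp1]
  refine Finset.sum_congr rfl fun x' _ => Finset.sum_congr rfl fun y' _ => ?_
  rw [if_pos ⟨fun j hj => absurd hj (by first | omega | (simp only [Fin.val_mk] at *; omega)), fun j hj => absurd hj (by first | omega | (simp only [Fin.val_mk] at *; omega))⟩]

lemma auxA_top (p : (Fin n → α) → (Fin n → β) → ℝ)
    (x : Fin n → α) (y : Fin n → β) : auxA p n x y = p x y := by
  unfold auxA pr
  have hiff : ∀ (x' : Fin n → α) (y' : Fin n → β),
      ((∀ j : Fin n, (j : ℕ) < n → x' j = x j) ∧ (∀ j : Fin n, (j : ℕ) < n → y' j = y j))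
        ↔ (x' = x ∧ y' = y) := by
    intro x' y'
    constructor
    · rintro ⟨h1, h2⟩
      exact ⟨funext fun j => h1 j j.isLt, funext fun j => h2 j j.isLt⟩
    · rintro ⟨rfl, rfl⟩
      exact ⟨fun _ _ => rfl, fun _ _ => rfl⟩
  simp only [hiff]
  rw [Finset.sum_eq_single x
    (fun x' _ hx' => Finset.sum_eq_zero fun y' _ => if_neg fun h => hx' h.1)
    (fun h => absurd (Finset.mem_univ x) h)]
  rw [Finset.sum_eq_single y
    (fun y' _ hy' => if_neg fun h => hy' h.2)
    (fun h => absurd (Finset.mem_univ y) h)]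
  rw [if_pos ⟨rfl, rfl⟩]

lemma auxA_le_auxB (p : (Fin n → α) → (Fin n → β) → ℝ) (hp0 : ∀ x y, 0 ≤ p x y)
    (k : ℕ) (x : Fin n → α) (y : Fin n → β) : auxA p (k + 1) x y ≤ auxB p k x y := by
  unfold auxA auxB
  exact pr_mono p hp0 fun x' y' h => ⟨fun j hj => h.1 j (by first | omega | (simp only [Fin.val_mk] at *; omega)), fun j hj => h.2 j hj⟩

lemma condX_eq_div (p : (Fin n → α) → (Fin n → β) → ℝ) (k : ℕ) (hk : k < n)
    (x : Fin n → α) (y : Fin n → β) :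
    condX p 0 ⟨k, hk⟩ x y = auxA p (k + 1) x y / auxB p k x y := by
  unfold condX auxA auxB
  congr 1
  · refine pr_congr p fun u v => ?_
    constructor
    · rintro ⟨h1, h2, h3⟩
      constructor
      · intro j hj
        rcases Nat.lt_or_ge (j : ℕ) k with h | h
        · exact h1 j (by rw [Fin.lt_def, Fin.val_mk]; exact h)
        · have hj' : j = ⟨k, hk⟩ := Fin.ext (by simp only [Fin.val_mk]; omega)
          rw [hj']; exact h2
      · intro j hj
        exact h3 j (by first | omega | (simp only [Fin.val_mk] at *; omega))
    · rintro ⟨h1, h2⟩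
      refine ⟨fun j hj => h1 j (by simp only [Fin.lt_def, Fin.val_mk] at hj; omega),
        h1 ⟨k, hk⟩ (Nat.lt_succ_self k), fun j hj => h2 j (by first | omega | (simp only [Fin.val_mk] at *; omega))⟩
  · refine pr_congr p fun u v => ?_
    constructor
    · rintro ⟨h1, h3⟩
      exact ⟨fun j hj => h1 j (by simp only [Fin.lt_def, Fin.val_mk]; omega), fun j hj => h3 j (by first | omega | (simp only [Fin.val_mk] at *; omega))⟩
    · rintro ⟨h1, h2⟩
      exact ⟨fun j hj => h1 j (by simp only [Fin.lt_def, Fin.val_mk] at hj; omega), fun j hj => h2 j (by first | omega | (simp only [Fin.val_mk] at *; omega))⟩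

lemma auxB_congr (p : (Fin n → α) → (Fin n → β) → ℝ) (k : ℕ)
    {x x' : Fin n → α} {y y' : Fin n → β}
    (hx : ∀ j : Fin n, (j : ℕ) < k → x j = x' j)
    (hy : ∀ j : Fin n, (j : ℕ) < k + 1 → y j = y' j) :
    auxB p k x y = auxB p k x' y' := by
  unfold auxB
  refine pr_congr p fun u v => ?_
  constructor
  · rintro ⟨h1, h2⟩
    exact ⟨fun j hj => (h1 j hj).trans (hx j hj), fun j hj => (h2 j hj).trans (hy j hj)⟩
  · rintro ⟨h1, h2⟩
    exact ⟨fun j hj => (h1 j hj).trans (hx j hj).symm,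
      fun j hj => (h2 j hj).trans (hy j hj).symm⟩

lemma auxProd_nonneg (p : (Fin n → α) → (Fin n → β) → ℝ) (hp0 : ∀ x y, 0 ≤ p x y)
    (b : Fin n → (Fin n → α) → (Fin n → β) → ℝ) (hb0 : ∀ i x y, 0 ≤ b i x y)
    (k : ℕ) (x : Fin n → α) (y : Fin n → β) : 0 ≤ auxProd p b k x y :=
  Finset.prod_nonneg fun i _ => div_nonneg (hb0 i x y) (condX_nonneg p hp0 0 i x y)

lemma auxProd_congr (p : (Fin n → α) → (Fin n → β) → ℝ)
    (b : Fin n → (Fin n → α) → (Fin n → β) → ℝ)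
    (hbc : ∀ i x x' y y', (∀ j, j ≤ i → x j = x' j) → (∀ j, j ≤ i → y j = y' j) →
      b i x y = b i x' y') (k : ℕ)
    {x x' : Fin n → α} {y y' : Fin n → β}
    (hx : ∀ j : Fin n, (j : ℕ) < k → x j = x' j)
    (hy : ∀ j : Fin n, (j : ℕ) < k → y j = y' j) :
    auxProd p b k x y = auxProd p b k x' y' := by
  unfold auxProd
  refine Finset.prod_congr rfl fun i hi => ?_
  simp only [Finset.mem_filter, Finset.mem_univ, true_and] at hi
  congr 1
  · exact hbc i x x' y y' (fun j hj => hx j (by rw [Fin.le_def] at hj; omega))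
      (fun j hj => hy j (by rw [Fin.le_def] at hj; omega))
  · exact condX_congr p i (fun j hj => hx j (by first | omega | (simp only [Fin.val_mk] at *; omega))) (fun j hj => hy j (by first | omega | (simp only [Fin.val_mk] at *; omega)))

lemma auxProd_succ (p : (Fin n → α) → (Fin n → β) → ℝ)
    (b : Fin n → (Fin n → α) → (Fin n → β) → ℝ) (k : ℕ) (hk : k < n)
    (x : Fin n → α) (y : Fin n → β) :
    auxProd p b (k + 1) x y
      = (b ⟨k, hk⟩ x y / condX p 0 ⟨k, hk⟩ x y) * auxProd p b k x y := by
  unfold auxProd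
  have hins : (Finset.univ.filter fun i : Fin n => (i : ℕ) < k + 1)
      = insert (⟨k, hk⟩ : Fin n) (Finset.univ.filter fun i : Fin n => (i : ℕ) < k) := by
    ext i
    simp only [Finset.mem_filter, Finset.mem_univ, true_and, Finset.mem_insert, Fin.ext_iff]
    omega
  rw [hins, Finset.prod_insert (by simp)]

lemma auxProd_top (p : (Fin n → α) → (Fin n → β) → ℝ)
    (b : Fin n → (Fin n → α) → (Fin n → β) → ℝ)
    (x : Fin n → α) (y : Fin n → β) :
    auxProd p b n x y = ∏ i, b i x y / condX p 0 i x y := by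
  unfold auxProd
  rw [Finset.filter_true_of_mem fun i _ => i.isLt]

lemma auxB_sum (p : (Fin n → α) → (Fin n → β) → ℝ) (k : ℕ) (hk : k < n)
    (x : Fin n → α) (y : Fin n → β) :
    ∑ c : β, auxB p k x (Function.update y ⟨k, hk⟩ c) = auxA p k x y := by
  have hc : ∀ c : β, auxB p k x (Function.update y ⟨k, hk⟩ c)
      = pr p (fun x' y' => ((∀ j : Fin n, (j : ℕ) < k → x' j = x j) ∧
          (∀ j : Fin n, (j : ℕ) < k → y' j = y j)) ∧ y' ⟨k, hk⟩ = c) := by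
    intro c
    unfold auxB
    refine pr_congr p fun u v => ?_
    constructor
    · rintro ⟨h1, h2⟩
      refine ⟨⟨h1, fun j hj => ?_⟩, ?_⟩
      · rw [h2 j (by first | omega | (simp only [Fin.val_mk] at *; omega)), Function.update_of_ne (by simp only [ne_eq, Fin.ext_iff, Fin.val_mk]; omega)]
      · rw [h2 ⟨k, hk⟩ (Nat.lt_succ_self k), Function.update_self]
    · rintro ⟨⟨h1, h2⟩, h3⟩
      refine ⟨h1, fun j hj => ?_⟩
      by_cases hjK : j = (⟨k, hk⟩ : Fin n)
      · rw [hjK, h3, Function.update_self]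
      · rw [h2 j (by simp only [Fin.ext_iff, Fin.val_mk] at hjK; omega), Function.update_of_ne hjK]
  simp only [hc]
  unfold auxA pr
  rw [Finset.sum_comm]
  refine Finset.sum_congr rfl fun x' _ => ?_
  rw [Finset.sum_comm]
  refine Finset.sum_congr rfl fun y' _ => ?_
  by_cases hE : ((∀ j : Fin n, (j : ℕ) < k → x' j = x j) ∧
      (∀ j : Fin n, (j : ℕ) < k → y' j = y j))
  · rw [if_pos hE]
    simp only [eq_true hE, true_and, Finset.sum_ite_eq, Finset.mem_univ, if_true]
  · simp [hE]


def auxT (p : (Fin n → α) → (Fin n → β) → ℝ)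
    (b : Fin n → (Fin n → α) → (Fin n → β) → ℝ)
    (x₀ : Fin n → α) (y₀ : Fin n → β) (k : ℕ) (K : Fin n)
    (u : Fin n → α) (v : Fin n → β) : ℝ :=
  if (∀ j : Fin n, k + 1 ≤ (j : ℕ) → u j = x₀ j ∧ v j = y₀ j)
  then b K u v * auxB p k u v * auxProd p b k u v else 0

lemma auxF_step (p : (Fin n → α) → (Fin n → β) → ℝ) (hp : IsPmf p)
    (b : Fin n → (Fin n → α) → (Fin n → β) → ℝ) (hb : IsCausalBet b)
    (x₀ : Fin n → α) (y₀ : Fin n → β) (k : ℕ) (hk : k < n) :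
    auxF p b x₀ y₀ (k + 1) ≤ auxF p b x₀ y₀ k := by
  obtain ⟨hp0, hp1⟩ := hp
  obtain ⟨hb0, hbc, hbs⟩ := hb
  have hne : ∀ j : Fin n, (j : ℕ) ≠ k → j ≠ (⟨k, hk⟩ : Fin n) := fun j hj => by
    simp only [ne_eq, Fin.ext_iff, Fin.val_mk]; omega
  have h1 : auxF p b x₀ y₀ (k + 1) ≤ ∑ x, ∑ y, auxT p b x₀ y₀ k ⟨k, hk⟩ x y := by
    unfold auxF auxT
    refine Finset.sum_le_sum fun x _ => Finset.sum_le_sum fun y _ => ?_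
    split_ifs with h
    · rw [auxProd_succ p b k hk x y, condX_eq_div p k hk x y]
      have hPn := auxProd_nonneg p hp0 b hb0 k x y
      have hbn := hb0 ⟨k, hk⟩ x y
      have hBn : 0 ≤ auxB p k x y := by unfold auxB; exact pr_nonneg p hp0 _
      have hAn : 0 ≤ auxA p (k + 1) x y := by unfold auxA; exact pr_nonneg p hp0 _
      have hmain : auxA p (k + 1) x y
            * (b ⟨k, hk⟩ x y / (auxA p (k + 1) x y / auxB p k x y))
          ≤ b ⟨k, hk⟩ x y * auxB p k x y := by
        rcases eq_or_lt_of_le hAn with hz | hpos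
        · rw [← hz, zero_mul]; exact mul_nonneg hbn hBn
        · have hBpos : 0 < auxB p k x y := lt_of_lt_of_le hpos (auxA_le_auxB p hp0 k x y)
          have hA' : auxA p (k + 1) x y ≠ 0 := ne_of_gt hpos
          have hB' : auxB p k x y ≠ 0 := ne_of_gt hBpos
          have heq2 : auxA p (k + 1) x y
              * (b ⟨k, hk⟩ x y / (auxA p (k + 1) x y / auxB p k x y))
              = b ⟨k, hk⟩ x y * auxB p k x y := by
            field_simp
            try ring
          rw [heq2]
      calc auxA p (k + 1) x y
            * (b ⟨k, hk⟩ x y / (auxA p (k + 1) x y / auxB p k x y) * auxProd p b k x y)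
          = (auxA p (k + 1) x y
            * (b ⟨k, hk⟩ x y / (auxA p (k + 1) x y / auxB p k x y))) * auxProd p b k x y := by
            ring
        _ ≤ (b ⟨k, hk⟩ x y * auxB p k x y) * auxProd p b k x y :=
            mul_le_mul_of_nonneg_right hmain hPn
    · exact le_rfl
  have hcore : ∀ (x : Fin n → α) (y : Fin n → β),
      (∑ c : β, ∑ a : α,
          auxT p b x₀ y₀ k ⟨k, hk⟩ (Function.update x ⟨k, hk⟩ a) (Function.update y ⟨k, hk⟩ c))
        = if (∀ j : Fin n, k + 1 ≤ (j : ℕ) → x j = x₀ j ∧ y j = y₀ j)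
          then auxA p k x y * auxProd p b k x y else 0 := by
    intro x y
    have hTuv : ∀ (a : α) (c : β),
        auxT p b x₀ y₀ k ⟨k, hk⟩ (Function.update x ⟨k, hk⟩ a) (Function.update y ⟨k, hk⟩ c)
          = if (∀ j : Fin n, k + 1 ≤ (j : ℕ) → x j = x₀ j ∧ y j = y₀ j)
            then b ⟨k, hk⟩ (Function.update x ⟨k, hk⟩ a) (Function.update y ⟨k, hk⟩ c)
              * auxB p k x (Function.update y ⟨k, hk⟩ c) * auxProd p b k x y else 0 := by
      intro a c
      unfold auxT
      refine if_congr ⟨fun h j hj => ?_, fun h j hj => ?_⟩ ?_ rfl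
      · have := h j hj
        rwa [Function.update_of_ne (hne j (by omega)),
          Function.update_of_ne (hne j (by omega))] at this
      · rw [Function.update_of_ne (hne j (by omega)),
          Function.update_of_ne (hne j (by omega))]
        exact h j hj
      · congr 1
        · congr 1
          refine auxB_congr p k (fun j hj => ?_) (fun j hj => rfl)
          exact Function.update_of_ne (hne j (by omega)) a x
        · refine auxProd_congr p b hbc k (fun j hj => ?_) (fun j hj => ?_)
          · exact Function.update_of_ne (hne j (by omega)) a x
          · exact Function.update_of_ne (hne j (by omega)) c y
    by_cases hind : (∀ j : Fin n, k + 1 ≤ (j : ℕ) → x j = x₀ j ∧ y j = y₀ j)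
    · simp only [hTuv, if_pos hind]
      have hinner : ∀ c : β,
          (∑ a : α, b ⟨k, hk⟩ (Function.update x ⟨k, hk⟩ a) (Function.update y ⟨k, hk⟩ c)
            * auxB p k x (Function.update y ⟨k, hk⟩ c) * auxProd p b k x y)
          = auxB p k x (Function.update y ⟨k, hk⟩ c) * auxProd p b k x y := by
        intro c
        rw [Finset.sum_congr rfl fun a _ => mul_assoc _ _ _, ← Finset.sum_mul,
          hbs ⟨k, hk⟩ x (Function.update y ⟨k, hk⟩ c), one_mul]
      rw [Finset.sum_congr rfl fun c _ => hinner c, ← Finset.sum_mul,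
        auxB_sum p k hk x y]
    · simp only [hTuv, if_neg hind]
      simp
  have h2 : (∑ x, ∑ y, auxT p b x₀ y₀ k ⟨k, hk⟩ x y) = auxF p b x₀ y₀ k := by
    rw [sum_split (⟨k, hk⟩ : Fin n) (x₀ ⟨k, hk⟩)
      (fun x => ∑ y, auxT p b x₀ y₀ k ⟨k, hk⟩ x y)]
    unfold auxF
    refine Finset.sum_congr rfl fun x _ => ?_
    by_cases hx : x ⟨k, hk⟩ = x₀ ⟨k, hk⟩
    · rw [if_pos hx]
      beta_reduce
      rw [Finset.sum_comm]
      rw [sum_split (⟨k, hk⟩ : Fin n) (y₀ ⟨k, hk⟩)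
        (fun y => ∑ a : α, auxT p b x₀ y₀ k ⟨k, hk⟩ (Function.update x ⟨k, hk⟩ a) y)]
      refine Finset.sum_congr rfl fun y _ => ?_
      by_cases hy : y ⟨k, hk⟩ = y₀ ⟨k, hk⟩
      · rw [if_pos hy]
        beta_reduce
        rw [hcore x y]
        refine if_congr ⟨fun h j hj => ?_, fun h j hj => h j (by omega)⟩ rfl rfl
        · rcases Nat.lt_or_ge k (j : ℕ) with hlt | hge
          · exact h j hlt
          · have hj' : j = ⟨k, hk⟩ := Fin.ext (by simp only [Fin.val_mk]; omega)
            rw [hj']; exact ⟨hx, hy⟩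
      · rw [if_neg hy]
        symm
        rw [if_neg]
        intro h
        exact hy (h ⟨k, hk⟩ le_rfl).2
    · rw [if_neg hx]
      symm
      refine Finset.sum_eq_zero fun y _ => if_neg fun h => hx (h ⟨k, hk⟩ le_rfl).1
  exact le_trans h1 (le_of_eq h2)

lemma aux_key (p : (Fin n → α) → (Fin n → β) → ℝ) (hp : IsPmf p)
    (b : Fin n → (Fin n → α) → (Fin n → β) → ℝ) (hb : IsCausalBet b)
    (x₀ : Fin n → α) (y₀ : Fin n → β) :
    ∑ x, ∑ y, p x y * ∏ i, b i x y / condX p 0 i x y ≤ 1 := by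
  have hF0 : auxF p b x₀ y₀ 0 = 1 := by
    unfold auxF
    have hterm : ∀ (x : Fin n → α) (y : Fin n → β),
        (if (∀ j : Fin n, 0 ≤ (j : ℕ) → x j = x₀ j ∧ y j = y₀ j)
         then auxA p 0 x y * auxProd p b 0 x y else 0)
        = (if x = x₀ then if y = y₀ then (1 : ℝ) else 0 else 0) := by
      intro x y
      by_cases hx : x = x₀
      · by_cases hy : y = y₀
        · rw [if_pos (fun j _ => ⟨by rw [hx], by rw [hy]⟩), if_pos hx, if_pos hy,
            auxA_eq_one p hp.2 x y]
          have hP1 : auxProd p b 0 x y = 1 := by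
            unfold auxProd
            rw [show (Finset.univ.filter fun i : Fin n => (i : ℕ) < 0) = ∅ from by
              ext i; simp, Finset.prod_empty]
          rw [hP1, mul_one]
        · rw [if_neg (fun h => hy (funext fun j => (h j (Nat.zero_le _)).2)),
            if_pos hx, if_neg hy]
      · rw [if_neg (fun h => hx (funext fun j => (h j (Nat.zero_le _)).1)), if_neg hx]
    rw [Finset.sum_congr rfl fun x _ => Finset.sum_congr rfl fun y _ => hterm x y]
    simp
  have hFn : auxF p b x₀ y₀ n = ∑ x, ∑ y, p x y * ∏ i, b i x y / condX p 0 i x y := by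
    unfold auxF
    refine Finset.sum_congr rfl fun x _ => Finset.sum_congr rfl fun y _ => ?_
    rw [if_pos (fun j hj => absurd j.isLt (by omega)), auxA_top, auxProd_top]
  have hmono : ∀ m, m ≤ n → auxF p b x₀ y₀ m ≤ 1 := by
    intro m
    induction m with
    | zero => intro _; exact le_of_eq hF0
    | succ m ih =>
      intro h
      exact le_trans (auxF_step p hp b hb x₀ y₀ m (by omega)) (ih (by omega))
  rw [← hFn]
  exact hmono n le_rfl


lemma neg_HccX (p : (Fin n → α) → (Fin n → β) → ℝ) (hp : IsPmf p) :
    -HccX p 0 = ∑ x, ∑ y, p x y * Real.logb 2 (∏ i, condX p 0 i x y) := by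
  unfold HccX HcondX
  rw [Finset.sum_neg_distrib, neg_neg, Finset.sum_comm]
  refine Finset.sum_congr rfl fun x _ => ?_
  rw [Finset.sum_comm]
  refine Finset.sum_congr rfl fun y _ => ?_
  rw [← Finset.mul_sum]
  rcases eq_or_lt_of_le (hp.1 x y) with h0 | hpos
  · rw [← h0, zero_mul, zero_mul]
  · congr 1
    exact (Real.logb_prod Finset.univ _ fun i _ =>
      ne_of_gt (condX_pos p hp.1 0 i hpos)).symm

end AuxCausalGambling

/-- optimal causal gambling. For any causal betting strategy `b`
(with finite log-wealth on the support of `p`), `E[log b(X^n||Y^n)] ≤ −H(X^n||Y^n)`,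
with equality for `b(xᵢ|x^{i-1},y^i) = p(xᵢ|x^{i-1},y^i)`; consequently
`W(b) ≤ E[log o(X^n)] − H(X^n||Y^n)` for every such strategy, with equality — i.e.
the maximum growth `W*(X^n||Y^n) = E[log o(X^n)] − H(X^n||Y^n)` — achieved at
`b = p(·|·,·)`. -/
theorem optimal_causal_gambling {n : ℕ}
    (p : (Fin n → α) → (Fin n → β) → ℝ) (hp : IsPmf p)
    (o : Fin n → (Fin n → α) → ℝ) (ho : ∀ i x, 0 < o i x)
    (hoc : ∀ i x x', (∀ j, j ≤ i → x j = x' j) → o i x = o i x') :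
    (∀ b, IsCausalBet b → (∀ x y, 0 < p x y → 0 < ∏ i, b i x y) →
        Elogb p b ≤ -HccX p 0) ∧
    Elogb p (fun i x y => condX p 0 i x y) = -HccX p 0 ∧
    (∀ b, IsCausalBet b → (∀ x y, 0 < p x y → 0 < ∏ i, b i x y) →
        growthW p o b ≤ Elogo p o - HccX p 0) ∧
    growthW p o (fun i x y => condX p 0 i x y) = Elogo p o - HccX p 0 := by
  have hne1 : Nonempty (Fin n → α) := by
    by_contra h
    rw [not_nonempty_iff] at h
    have h2 := hp.2
    rw [@Finset.univ_eq_empty _ _ h, Finset.sum_empty] at h2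
    exact one_ne_zero h2.symm
  have hne2 : Nonempty (Fin n → β) := by
    by_contra h
    rw [not_nonempty_iff] at h
    have h2 := hp.2
    rw [show (∑ x : Fin n → α, ∑ y : Fin n → β, p x y) = 0 from
      Finset.sum_eq_zero fun x _ => by
        rw [@Finset.univ_eq_empty _ _ h, Finset.sum_empty]] at h2
    exact one_ne_zero h2.symm
  obtain ⟨x₀⟩ := hne1
  obtain ⟨y₀⟩ := hne2
  have hlog2 : (0 : ℝ) < Real.log 2 := Real.log_pos (by norm_num)
  have part1 : ∀ b, IsCausalBet b → (∀ x y, 0 < p x y → 0 < ∏ i, b i x y) →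
      Elogb p b ≤ -HccX p 0 := by
    intro b hb hbpos
    rw [neg_HccX p hp]
    unfold Elogb
    have hkey := aux_key p hp b hb x₀ y₀
    have hterm : ∀ x y, p x y * Real.logb 2 (∏ i, b i x y)
        - p x y * Real.logb 2 (∏ i, condX p 0 i x y)
        ≤ (p x y * ∏ i, b i x y / condX p 0 i x y - p x y) / Real.log 2 := by
      intro x y
      rcases eq_or_lt_of_le (hp.1 x y) with h0 | hpos
      · rw [← h0]; simp
      · have hbp := hbpos x y hpos
        have hcp : ∀ i : Fin n, 0 < condX p 0 i x y := fun i => condX_pos p hp.1 0 i hpos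
        have hcprod : 0 < ∏ i, condX p 0 i x y := Finset.prod_pos fun i _ => hcp i
        have hR : (∏ i, b i x y / condX p 0 i x y)
            = (∏ i, b i x y) / ∏ i, condX p 0 i x y := Finset.prod_div_distrib _ _
        have hRpos : 0 < (∏ i, b i x y) / ∏ i, condX p 0 i x y := div_pos hbp hcprod
        have hlb : Real.logb 2 (∏ i, b i x y) - Real.logb 2 (∏ i, condX p 0 i x y)
            = Real.logb 2 ((∏ i, b i x y) / ∏ i, condX p 0 i x y) :=
          (Real.logb_div (ne_of_gt hbp) (ne_of_gt hcprod)).symm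
        have hlog : Real.logb 2 ((∏ i, b i x y) / ∏ i, condX p 0 i x y)
            ≤ ((∏ i, b i x y) / (∏ i, condX p 0 i x y) - 1) / Real.log 2 := by
          unfold Real.logb
          exact (div_le_div_iff_of_pos_right hlog2).mpr (Real.log_le_sub_one_of_pos hRpos)
        calc p x y * Real.logb 2 (∏ i, b i x y)
              - p x y * Real.logb 2 (∏ i, condX p 0 i x y)
            = p x y * (Real.logb 2 (∏ i, b i x y)
              - Real.logb 2 (∏ i, condX p 0 i x y)) := by ring
          _ = p x y * Real.logb 2 ((∏ i, b i x y) / ∏ i, condX p 0 i x y) := by rw [hlb]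
          _ ≤ p x y * (((∏ i, b i x y) / (∏ i, condX p 0 i x y) - 1) / Real.log 2) :=
              mul_le_mul_of_nonneg_left hlog (le_of_lt hpos)
          _ = (p x y * ((∏ i, b i x y) / (∏ i, condX p 0 i x y)) - p x y) / Real.log 2 := by
              ring
          _ = (p x y * ∏ i, b i x y / condX p 0 i x y - p x y) / Real.log 2 := by rw [hR]
    have hsum : (∑ x, ∑ y, (p x y * Real.logb 2 (∏ i, b i x y)
          - p x y * Real.logb 2 (∏ i, condX p 0 i x y)))
        ≤ ∑ x, ∑ y, ((p x y * ∏ i, b i x y / condX p 0 i x y - p x y) / Real.log 2) :=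
      Finset.sum_le_sum fun x _ => Finset.sum_le_sum fun y _ => hterm x y
    have hL : (∑ x, ∑ y, (p x y * Real.logb 2 (∏ i, b i x y)
          - p x y * Real.logb 2 (∏ i, condX p 0 i x y)))
        = (∑ x, ∑ y, p x y * Real.logb 2 (∏ i, b i x y))
          - ∑ x, ∑ y, p x y * Real.logb 2 (∏ i, condX p 0 i x y) := by
      rw [← Finset.sum_sub_distrib]
      exact Finset.sum_congr rfl fun x _ => Finset.sum_sub_distrib _ _
    have hRt : (∑ x, ∑ y, ((p x y * ∏ i, b i x y / condX p 0 i x y - p x y) / Real.log 2))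
        = ((∑ x, ∑ y, p x y * ∏ i, b i x y / condX p 0 i x y) - 1) / Real.log 2 := by
      have e1 : (∑ x, ∑ y, ((p x y * ∏ i, b i x y / condX p 0 i x y - p x y) / Real.log 2))
          = (∑ x, ∑ y, (p x y * ∏ i, b i x y / condX p 0 i x y - p x y)) / Real.log 2 := by
        rw [Finset.sum_div]
        exact Finset.sum_congr rfl fun x _ => (Finset.sum_div _ _ _).symm
      rw [e1]
      congr 1
      have e2 : (∑ x, ∑ y, (p x y * ∏ i, b i x y / condX p 0 i x y - p x y))
          = (∑ x, ∑ y, p x y * ∏ i, b i x y / condX p 0 i x y) - ∑ x, ∑ y, p x y := by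
        rw [← Finset.sum_sub_distrib]
        exact Finset.sum_congr rfl fun x _ => Finset.sum_sub_distrib _ _
      rw [e2, hp.2]
    have hnonpos : ((∑ x, ∑ y, p x y * ∏ i, b i x y / condX p 0 i x y) - 1) / Real.log 2 ≤ 0 :=
      div_nonpos_of_nonpos_of_nonneg (by linarith) (le_of_lt hlog2)
    rw [hL, hRt] at hsum
    linarith
  have part2 : Elogb p (fun i x y => condX p 0 i x y) = -HccX p 0 := by
    rw [neg_HccX p hp]
    rfl
  have hcpos : ∀ x y, 0 < p x y → 0 < ∏ i, condX p 0 i x y :=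
    fun x y h => Finset.prod_pos fun i _ => condX_pos p hp.1 0 i h
  have hsplitW : ∀ b : Fin n → (Fin n → α) → (Fin n → β) → ℝ,
      (∀ x y, 0 < p x y → 0 < ∏ i, b i x y) →
      growthW p o b = Elogb p b + Elogo p o := by
    intro b hbpos
    unfold growthW Elogb Elogo
    rw [← Finset.sum_add_distrib]
    refine Finset.sum_congr rfl fun x _ => ?_
    rw [← Finset.sum_add_distrib]
    refine Finset.sum_congr rfl fun y _ => ?_
    rcases eq_or_lt_of_le (hp.1 x y) with h0 | hpos
    · rw [← h0]; ring
    · rw [Finset.prod_mul_distrib, Real.logb_mul (ne_of_gt (hbpos x y hpos))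
        (ne_of_gt (Finset.prod_pos fun i _ => ho i x))]
      ring
  refine ⟨part1, part2, fun b hb hbpos => ?_, ?_⟩
  · rw [hsplitW b hbpos]
    have := part1 b hb hbpos
    linarith
  · rw [hsplitW _ hcpos, part2]
    ring
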